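/- An allocation rule on a fixed finite agent set satisfies WRP-π, EF1, non-wastefulness, and resource monotonicity if and only if it equals the draft rule φ^π associated with priority π. -/

import Mathlib

open Finset

noncomputable section

abbrev Obj := ℕ

def PD (r : Obj → Obj → Prop) (S T : Finset Obj) : Prop :=
  ∃ μ : {x // x ∈ T} → {x // x ∈ S}, Function.Injective μ ∧ ∀ x, r (μ x).1 x.1

def StrictPD (r : Obj → Obj → Prop) (S T : Finset Obj) : Prop :=
  PD r S T ∧ ¬ PD r T S

def LinProfile {n : ℕ} (pref : Fin n → Obj → Obj → Prop) : Prop :=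
  ∀ i, IsLinearOrder Obj (pref i)

def IsAlloc {n : ℕ} (A : Fin n → Finset Obj) (X : Finset Obj) : Prop :=
  (∀ i, A i ⊆ X) ∧ ∀ i j, i ≠ j → Disjoint (A i) (A j)

open Classical in
def topOf (r : Obj → Obj → Prop) (X : Finset Obj) : Obj :=
  if h : ∃ m ∈ X, ∀ x ∈ X, r m x then h.choose else 0

def remaining {n : ℕ} (pref : Fin n → Obj → Obj → Prop) (f : ℕ → Fin n)
    (X : Finset Obj) : ℕ → Finset Obj
  | 0 => X
  | k + 1 => (remaining pref f X k).erase (topOf (pref (f k)) (remaining pref f X k))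

def draft {n : ℕ} (pref : Fin n → Obj → Obj → Prop) (f : ℕ → Fin n)
    (X : Finset Obj) (i : Fin n) : Finset Obj :=
  ((Finset.range X.card).filter (fun k => f k = i)).image
    (fun k => topOf (pref (f k)) (remaining pref f X k))

def roundRobin {n : ℕ} (hn : 0 < n) (π : Equiv.Perm (Fin n)) (k : ℕ) : Fin n :=
  π.symm ⟨k % n, Nat.mod_lt k hn⟩

def draftPi {n : ℕ} (hn : 0 < n) (pref : Fin n → Obj → Obj → Prop)
    (π : Equiv.Perm (Fin n)) (X : Finset Obj) (i : Fin n) : Finset Obj :=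
  draft pref (roundRobin hn π) X i



lemma exists_top (r : Obj → Obj → Prop) [IsLinearOrder Obj r] {X : Finset Obj}
    (hX : X.Nonempty) : ∃ m ∈ X, ∀ x ∈ X, r m x := by
  induction X using Finset.cons_induction with
  | empty => exact absurd hX (by simp)
  | cons a s ha ih =>
    rcases s.eq_empty_or_nonempty with rfl | hs
    · exact ⟨a, by simp, by simp [refl_of r a]⟩
    · obtain ⟨m, hm, hall⟩ := ih hs
      rcases total_of r a m with h | h
      · exact ⟨a, by simp, by
          intro x hx
          rcases Finset.mem_cons.mp hx with rfl | hx
          · exact refl_of r _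
          · exact trans_of r h (hall x hx)⟩
      · exact ⟨m, Finset.mem_cons_of_mem hm, by
          intro x hx
          rcases Finset.mem_cons.mp hx with rfl | hx
          · exact h
          · exact hall x hx⟩

lemma topOf_spec (r : Obj → Obj → Prop) [IsLinearOrder Obj r] {X : Finset Obj}
    (hX : X.Nonempty) : topOf r X ∈ X ∧ ∀ x ∈ X, r (topOf r X) x := by
  have h : ∃ m ∈ X, ∀ x ∈ X, r m x := exists_top r hX
  rw [topOf, dif_pos h]
  exact ⟨h.choose_spec.1, h.choose_spec.2⟩

lemma topOf_mem (r : Obj → Obj → Prop) [IsLinearOrder Obj r] {X : Finset Obj}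
    (hX : X.Nonempty) : topOf r X ∈ X := (topOf_spec r hX).1

lemma topOf_le (r : Obj → Obj → Prop) [IsLinearOrder Obj r] {X : Finset Obj}
    (hX : X.Nonempty) {x : Obj} (hx : x ∈ X) : r (topOf r X) x := (topOf_spec r hX).2 x hx

lemma topOf_eq (r : Obj → Obj → Prop) [IsLinearOrder Obj r] {X : Finset Obj} {b : Obj}
    (hb : b ∈ X) (hall : ∀ x ∈ X, r b x) : topOf r X = b := by
  have h1 := topOf_le r ⟨b, hb⟩ hb
  have h2 := hall _ (topOf_mem r ⟨b, hb⟩)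
  exact antisymm h1 h2

def pick {n : ℕ} (pref : Fin n → Obj → Obj → Prop) (f : ℕ → Fin n)
    (X : Finset Obj) (k : ℕ) : Obj :=
  topOf (pref (f k)) (remaining pref f X k)

section Picks
variable {n : ℕ} {pref : Fin n → Obj → Obj → Prop} {f : ℕ → Fin n} {X : Finset Obj}
variable (hpref : LinProfile pref)

lemma rem_succ (k : ℕ) :
    remaining pref f X (k+1) = (remaining pref f X k).erase (pick pref f X k) := rfl

lemma rem_succ_subset (k : ℕ) : remaining pref f X (k+1) ⊆ remaining pref f X k :=
  Finset.erase_subset _ _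

lemma rem_mono {k l : ℕ} (h : k ≤ l) : remaining pref f X l ⊆ remaining pref f X k := by
  induction l with
  | zero => simp [Nat.le_zero.mp h]
  | succ l ih =>
    rcases Nat.lt_or_ge k (l+1) with h' | h'
    · exact (rem_succ_subset l).trans (ih (Nat.lt_succ_iff.mp h'))
    · have : k = l + 1 := le_antisymm h h'
      subst this; exact Finset.Subset.refl _

lemma rem_subset (k : ℕ) : remaining pref f X k ⊆ X := rem_mono (Nat.zero_le k)

include hpref

lemma rem_card {k : ℕ} (h : k ≤ X.card) : (remaining pref f X k).card = X.card - k := by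
  induction k with
  | zero => simp [remaining]
  | succ k ih =>
    have hk : k ≤ X.card := le_of_lt h
    have hcard := ih hk
    have hne : (remaining pref f X k).Nonempty := by
      rw [← Finset.card_pos, hcard]; omega
    haveI := hpref (f k)
    have hm : pick pref f X k ∈ remaining pref f X k := topOf_mem _ hne
    rw [rem_succ, Finset.card_erase_of_mem hm, hcard]
    omega

lemma rem_nonempty {k : ℕ} (h : k < X.card) : (remaining pref f X k).Nonempty := by
  rw [← Finset.card_pos, rem_card hpref (le_of_lt h)]; omega

lemma pick_mem {k : ℕ} (h : k < X.card) : pick pref f X k ∈ remaining pref f X k := by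
  haveI := hpref (f k); exact topOf_mem _ (rem_nonempty hpref h)

lemma pick_mem_X {k : ℕ} (h : k < X.card) : pick pref f X k ∈ X :=
  rem_subset k (pick_mem hpref h)

lemma pick_top {k : ℕ} (h : k < X.card) {x : Obj} (hx : x ∈ remaining pref f X k) :
    pref (f k) (pick pref f X k) x := by
  haveI := hpref (f k); exact topOf_le _ (rem_nonempty hpref h) hx

lemma pick_ne {k l : ℕ} (hkl : k < l) (hl : l < X.card) :
    pick pref f X k ≠ pick pref f X l := by
  intro h
  have h1 : pick pref f X l ∈ remaining pref f X (k+1) :=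
    rem_mono (Nat.succ_le_of_lt hkl) (pick_mem hpref hl)
  rw [← h] at h1
  exact Finset.notMem_erase _ _ h1

lemma pick_injOn {k l : ℕ} (hk : k < X.card) (hl : l < X.card)
    (h : pick pref f X k = pick pref f X l) : k = l := by
  rcases Nat.lt_trichotomy k l with h' | h' | h'
  · exact absurd h (pick_ne hpref h' hl)
  · exact h'
  · exact absurd h.symm (pick_ne hpref h' hk)

omit hpref in
lemma cover {k : ℕ} {x : Obj} (hx : x ∈ X) :
    x ∈ remaining pref f X k ∨ ∃ l, l < k ∧ pick pref f X l = x := by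
  induction k with
  | zero => exact Or.inl hx
  | succ k ih =>
    rcases ih with h | ⟨l, hl, he⟩
    · by_cases he : pick pref f X k = x
      · exact Or.inr ⟨k, Nat.lt_succ_self k, he⟩
      · exact Or.inl (Finset.mem_erase.mpr ⟨fun h' => he h'.symm, h⟩)
    · exact Or.inr ⟨l, Nat.lt_succ_of_lt hl, he⟩

omit hpref in
lemma draft_mem {i : Fin n} {x : Obj} :
    x ∈ draft pref f X i ↔ ∃ k, k < X.card ∧ f k = i ∧ pick pref f X k = x := by
  simp [draft, pick, Finset.mem_image, Finset.mem_filter, Finset.mem_range]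
  tauto

omit hpref in
lemma pick_mem_draft {k : ℕ} (h : k < X.card) : pick pref f X k ∈ draft pref f X (f k) :=
  draft_mem.mpr ⟨k, h, rfl, rfl⟩

lemma draft_card {i : Fin n} :
    (draft pref f X i).card = ((Finset.range X.card).filter (fun k => f k = i)).card := by
  rw [draft]
  apply Finset.card_image_of_injOn
  intro k hk l hl h
  simp only [Finset.mem_coe, Finset.mem_filter, Finset.mem_range] at hk hl
  exact pick_injOn hpref hk.1 hl.1 h

lemma draft_subset {i : Fin n} : draft pref f X i ⊆ X := by
  intro x hx
  obtain ⟨k, hk, _, he⟩ := draft_mem.mp hx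
  exact he ▸ pick_mem_X hpref hk

lemma draft_disjoint {i j : Fin n} (hij : i ≠ j) :
    Disjoint (draft pref f X i) (draft pref f X j) := by
  rw [Finset.disjoint_left]
  intro x hxi hxj
  obtain ⟨k, hk, hfk, hek⟩ := draft_mem.mp hxi
  obtain ⟨l, hl, hfl, hel⟩ := draft_mem.mp hxj
  have : k = l := pick_injOn hpref hk hl (hek.trans hel.symm)
  exact hij (hfk ▸ hfl ▸ this ▸ rfl)

lemma biUnion_draft : Finset.univ.biUnion (draft pref f X) = X := by
  apply Finset.Subset.antisymm
  · intro x hx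
    obtain ⟨i, _, hxi⟩ := Finset.mem_biUnion.mp hx
    exact draft_subset hpref hxi
  · intro x hx
    rcases cover (k := X.card) hx with h | ⟨l, hl, he⟩
    · have : (remaining pref f X X.card).card = 0 := by rw [rem_card hpref le_rfl]; omega
      rw [Finset.card_eq_zero.mp this] at h
      exact absurd h (Finset.notMem_empty x)
    · exact Finset.mem_biUnion.mpr ⟨f l, Finset.mem_univ _, he ▸ pick_mem_draft hl⟩

end Picks

section Sub
variable {n : ℕ} {pref : Fin n → Obj → Obj → Prop} {f : ℕ → Fin n} {X X' : Finset Obj}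
variable (hpref : LinProfile pref)
include hpref

/-- remaining sets of a subproblem are subsets of remaining sets of the big problem. -/
lemma rem_sub (hXX : X' ⊆ X) (k : ℕ) :
    remaining pref f X' k ⊆ remaining pref f X k := by
  induction k with
  | zero => exact hXX
  | succ k ih =>
    intro x hx
    rw [rem_succ] at hx ⊢
    obtain ⟨hxne, hxmem⟩ := Finset.mem_erase.mp hx
    have hxX : x ∈ remaining pref f X k := ih hxmem
    refine Finset.mem_erase.mpr ⟨?_, hxX⟩
    intro hcontra
    -- x = pick X k; but then pick X k ∈ rem X' k, so pick X' k = pick X k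
    haveI := hpref (f k)
    have hne' : (remaining pref f X' k).Nonempty := ⟨x, hxmem⟩
    have hmem' : pick pref f X k ∈ remaining pref f X' k := hcontra ▸ hxmem
    have htop : ∀ z ∈ remaining pref f X' k, pref (f k) (pick pref f X k) z := by
      intro z hz
      exact topOf_le _ ⟨x, ih hxmem⟩ (ih hz)
    have : topOf (pref (f k)) (remaining pref f X' k) = pick pref f X k :=
      topOf_eq _ hmem' htop
    exact hxne (hcontra.trans this.symm)

/-- the pick of the big problem dominates the pick of the subproblem, step by step. -/
lemma pick_dominates (hXX : X' ⊆ X) {k : ℕ} (hk : k < X'.card) :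
    pref (f k) (pick pref f X k) (pick pref f X' k) := by
  have h1 : pick pref f X' k ∈ remaining pref f X k :=
    rem_sub hpref hXX k (pick_mem hpref hk)
  exact pick_top hpref (lt_of_lt_of_le hk (Finset.card_le_card hXX)) h1

/-- removing the last pick does not change the earlier remnants. -/
lemma rem_erase_last (hm : 0 < X.card) {k : ℕ} (hk : k ≤ X.card - 1) :
    remaining pref f (X.erase (pick pref f X (X.card - 1))) k
      = (remaining pref f X k).erase (pick pref f X (X.card - 1)) := by
  set y := pick pref f X (X.card - 1) with hy
  induction k with
  | zero => rfl
  | succ k ih =>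
    have hk' : k ≤ X.card - 1 := le_of_lt hk
    have hklt : k < X.card - 1 := hk
    have hih := ih hk'
    have hy_mem : y ∈ remaining pref f X k := rem_mono (by omega) (pick_mem hpref (by omega))
    have hpk_ne : pick pref f X k ≠ y := pick_ne hpref hklt (by omega)
    have hpk_mem : pick pref f X k ∈ (remaining pref f X k).erase y :=
      Finset.mem_erase.mpr ⟨hpk_ne, pick_mem hpref (by omega)⟩
    haveI := hpref (f k)
    have hpick_eq : pick pref f (X.erase y) k = pick pref f X k := by
      rw [pick, hih]
      exact topOf_eq _ hpk_mem (fun x hx =>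
        pick_top hpref (by omega) (Finset.mem_erase.mp hx).2)
    rw [rem_succ, rem_succ, hih, hpick_eq, Finset.erase_right_comm]

lemma pick_erase_last (hm : 0 < X.card) {k : ℕ} (hk : k < X.card - 1) :
    pick pref f (X.erase (pick pref f X (X.card - 1))) k = pick pref f X k := by
  set y := pick pref f X (X.card - 1) with hy
  have hih := rem_erase_last (f := f) hpref hm (le_of_lt hk)
  have hpk_ne : pick pref f X k ≠ y := pick_ne hpref hk (by omega)
  have hpk_mem : pick pref f X k ∈ (remaining pref f X k).erase y :=
    Finset.mem_erase.mpr ⟨hpk_ne, pick_mem hpref (by omega)⟩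
  haveI := hpref (f k)
  rw [pick, hih]
  exact topOf_eq _ hpk_mem (fun x hx =>
    pick_top hpref (by omega) (Finset.mem_erase.mp hx).2)

lemma card_erase_last (hm : 0 < X.card) :
    (X.erase (pick pref f X (X.card - 1))).card = X.card - 1 :=
  Finset.card_erase_of_mem (pick_mem_X hpref (by omega))

end Sub

lemma count_mod_card {n : ℕ} (hn : 0 < n) (a : ℕ) (ha : a < n) (m : ℕ) :
    ((Finset.range m).filter (fun k => k % n = a)).card
      = m / n + if a < m % n then 1 else 0 := by
  induction m with
  | zero => simp [Nat.not_lt_zero, Nat.zero_mod, Nat.zero_div]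
  | succ m ih =>
    have hstep : ((Finset.range (m+1)).filter (fun k => k % n = a)).card
        = ((Finset.range m).filter (fun k => k % n = a)).card
          + if m % n = a then 1 else 0 := by
      rw [Finset.range_add_one, Finset.filter_insert]
      split
      · rw [Finset.card_insert_of_notMem (by simp)]
      · simp
    have hsublt : m % n < n := Nat.mod_lt m hn
    have hdm := Nat.div_add_mod m n
    rcases Nat.lt_or_ge (m % n + 1) n with hlt | hge
    · have h1 : (m+1) / n = m / n ∧ (m+1) % n = m % n + 1 := by
        rw [Nat.div_mod_unique hn]
        exact ⟨by omega, by omega⟩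
      rw [hstep, ih, h1.1, h1.2]
      by_cases hc : m % n = a
      · rw [if_pos hc, if_neg (by omega), if_pos (by omega)]
      · rw [if_neg hc]
        by_cases hac : a < m % n
        · rw [if_pos hac, if_pos (by omega)]
        · rw [if_neg hac, if_neg (by omega)]
    · have hn1 : m % n + 1 = n := by omega
      have hmul : n * (m / n + 1) = n * (m / n) + n := by ring
      have h1 : (m+1) / n = m / n + 1 ∧ (m+1) % n = 0 := by
        rw [Nat.div_mod_unique hn]
        exact ⟨by omega, by omega⟩
      rw [hstep, ih, h1.1, h1.2]
      by_cases hc : m % n = a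
      · rw [if_pos hc, if_neg (by omega), if_neg (by omega)]
      · rw [if_neg hc, if_pos (by omega), if_neg (by omega)]

lemma uniq_card_profile {n : ℕ} (hn : 0 < n) (u : Fin n → ℕ) (m : ℕ)
    (hmono : ∀ a b : Fin n, a ≤ b → u b ≤ u a)
    (hbal : ∀ a b : Fin n, u a ≤ u b + 1)
    (hsum : ∑ a, u a = m) (a : Fin n) :
    u a = m / n + if (a : ℕ) < m % n then 1 else 0 := by
  have hlast : n - 1 < n := by omega
  set last : Fin n := ⟨n - 1, hlast⟩ with hlastdef
  set q := u last with hq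
  have hub : ∀ b : Fin n, u b = q ∨ u b = q + 1 := by
    intro b
    have h1 : q ≤ u b := hmono b last (by simp [hlastdef, Fin.le_def]; omega)
    have h2 : u b ≤ q + 1 := hbal b last
    omega
  classical
  set R := Finset.univ.filter (fun b : Fin n => u b = q + 1) with hR
  have hmemR : ∀ b : Fin n, b ∈ R ↔ u b = q + 1 := by
    intro b; rw [hR, Finset.mem_filter]; simp
  have hdc : ∀ b : Fin n, b ∈ R ↔ (b : ℕ) < R.card := by
    intro b
    constructor
    · intro hb
      have hsub : Finset.Iic b ⊆ R := by
        intro c hc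
        rw [hmemR]
        have h3 := hmono c b (Finset.mem_Iic.mp hc)
        have hb' := (hmemR b).mp hb
        rcases hub c with h | h
        · omega
        · exact h
      have := Finset.card_le_card hsub
      rw [Fin.card_Iic] at this
      omega
    · intro hb
      by_contra hbn
      have hsub : R ⊆ Finset.Iio b := by
        intro c hc
        rw [Finset.mem_Iio]
        by_contra hcb
        push_neg at hcb
        apply hbn
        rw [hmemR] at hc ⊢
        have := hmono b c hcb
        rcases hub b with h | h
        · omega
        · exact h
      have := Finset.card_le_card hsub
      rw [Fin.card_Iio] at this
      omega
  have hlast_notin : last ∉ R := by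
    rw [hmemR, ← hq]; omega
  have hrlt : R.card < n := by
    by_contra hge
    push_neg at hge
    exact hlast_notin ((hdc last).mpr (by simp [hlastdef]; omega))
  have hsum2 : m = n * q + R.card := by
    have hsplit := Finset.sum_filter_add_sum_filter_not Finset.univ
      (fun b : Fin n => u b = q + 1) u
    have e1 : ∑ b ∈ Finset.univ.filter (fun b : Fin n => u b = q + 1), u b
        = R.card * (q + 1) := by
      rw [← hR]
      apply Finset.sum_eq_card_nsmul
      intro b hb; exact (hmemR b).mp hb
    have e2 : ∑ b ∈ Finset.univ.filter (fun b : Fin n => ¬ u b = q + 1), u b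
        = (n - R.card) * q := by
      have hcards : (Finset.univ.filter (fun b : Fin n => ¬ u b = q + 1)).card
          = n - R.card := by
        have h4 := Finset.card_filter_add_card_filter_not
          (s := (Finset.univ : Finset (Fin n))) (p := fun b : Fin n => u b = q + 1)
        simp only [Finset.card_univ, Fintype.card_fin] at h4
        rw [← hR] at h4
        omega
      rw [← hcards]
      apply Finset.sum_eq_card_nsmul
      intro b hb
      have h5 := (Finset.mem_filter.mp hb).2
      rcases hub b with h | h
      · exact h
      · exact absurd h h5
    rw [e1, e2] at hsplit
    rw [← hsum, ← hsplit]
    have hrn : R.card ≤ n := by omega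
    have : (n - R.card) * q = n * q - R.card * q := by
      rw [Nat.sub_mul]
    rw [this]
    have h6 : R.card * q ≤ n * q := Nat.mul_le_mul_right q hrn
    have h7 : R.card * (q + 1) = R.card * q + R.card := by ring
    omega
  have hdm := Nat.div_add_mod m n
  have hdiv : m / n = q ∧ m % n = R.card := by
    rw [Nat.div_mod_unique hn]
    refine ⟨by omega, by omega⟩
  rw [hdiv.1, hdiv.2]
  rcases Nat.lt_or_ge (a : ℕ) R.card with h | h
  · rw [if_pos h]
    exact (hmemR a).mp ((hdc a).mpr h)
  · rw [if_neg (by omega)]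
    have hna : a ∉ R := fun hc => by have := (hdc a).mp hc; omega
    rcases hub a with h' | h'
    · exact h'
    · exact absurd ((hmemR a).mpr h') hna

lemma roundRobin_eq {n : ℕ} (hn : 0 < n) (π : Equiv.Perm (Fin n)) (k : ℕ) (i : Fin n) :
    roundRobin hn π k = i ↔ k % n = (π i : ℕ) := by
  rw [roundRobin, Equiv.symm_apply_eq, Fin.ext_iff]

lemma PD_of_inj_map (r : Obj → Obj → Prop) {S T : Finset Obj} (σ : Obj → Obj)
    (hmem : ∀ x ∈ T, σ x ∈ S) (hinj : Set.InjOn σ T) (hdom : ∀ x ∈ T, r (σ x) x) :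
    PD r S T := by
  refine ⟨fun x => ⟨σ x.1, hmem x.1 x.2⟩, ?_, fun x => hdom x.1 x.2⟩
  intro x y h
  exact Subtype.ext (hinj x.2 y.2 (congrArg Subtype.val h))

lemma PD_card {r : Obj → Obj → Prop} {S T : Finset Obj} (h : PD r S T) :
    T.card ≤ S.card := by
  obtain ⟨μ, hinj, -⟩ := h
  have := Fintype.card_le_of_injective μ hinj
  simpa using this

section RR
variable {n : ℕ} {pref : Fin n → Obj → Obj → Prop} {X : Finset Obj}
  (hn : 0 < n) (π : Equiv.Perm (Fin n)) (hpref : LinProfile pref)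

include hpref

lemma draftPi_card (i : Fin n) :
    (draftPi hn pref π X i).card
      = X.card / n + if (π i : ℕ) < X.card % n then 1 else 0 := by
  rw [draftPi, draft_card hpref]
  rw [Finset.filter_congr (fun k _ => by rw [roundRobin_eq hn π k i])]
  exact count_mod_card hn (π i) (π i).is_lt X.card

lemma draftPi_WRP {i j : Fin n} (hij : π i < π j) :
    (draftPi hn pref π X j).card ≤ (draftPi hn pref π X i).card := by
  rw [draftPi_card hn π hpref, draftPi_card hn π hpref]
  have : (π i : ℕ) < (π j : ℕ) := hij
  by_cases h : (π j : ℕ) < X.card % n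
  · rw [if_pos h, if_pos (by omega)]
  · rw [if_neg h]
    omega

lemma draftPi_NW : Finset.univ.biUnion (draftPi hn pref π X) = X :=
  biUnion_draft hpref

lemma draftPi_RM {X' : Finset Obj} (hXX : X' ⊆ X) (i : Fin n) :
    PD (pref i) (draftPi hn pref π X i) (draftPi hn pref π X' i) := by
  classical
  unfold draftPi draft
  haveI := hpref i
  have hmemiff : ∀ {Y : Finset Obj} {x : Obj},
      x ∈ ((Finset.range Y.card).filter (fun k => roundRobin hn π k = i)).image
        (fun k => topOf (pref (roundRobin hn π k)) (remaining pref (roundRobin hn π) Y k))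
      ↔ ∃ k, k < Y.card ∧ roundRobin hn π k = i ∧ pick pref (roundRobin hn π) Y k = x := by
    intro Y x
    exact draft_mem (f := roundRobin hn π)
  set σ : Obj → Obj := fun x =>
    if h : ∃ k, k < X'.card ∧ roundRobin hn π k = i ∧ pick pref (roundRobin hn π) X' k = x then
      pick pref (roundRobin hn π) X h.choose else 0 with hσ
  apply PD_of_inj_map _ σ
  · intro x hx
    have hex := hmemiff.mp hx
    simp only [hσ, dif_pos hex]
    obtain ⟨hk, hfk, hpk⟩ := hex.choose_spec
    have hkX : hex.choose < X.card := lt_of_lt_of_le hk (Finset.card_le_card hXX)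
    exact hmemiff.mpr ⟨hex.choose, hkX, hfk, rfl⟩
  · intro x hx y hy hxy
    simp only [Finset.mem_coe] at hx hy
    have hex := hmemiff.mp hx
    have hey := hmemiff.mp hy
    simp only [hσ, dif_pos hex, dif_pos hey] at hxy
    obtain ⟨hk1, hf1, hp1⟩ := hex.choose_spec
    obtain ⟨hk2, hf2, hp2⟩ := hey.choose_spec
    have hc := Finset.card_le_card hXX
    have := pick_injOn hpref (by omega) (by omega) hxy
    rw [← hp1, ← hp2, this]
  · intro x hx
    have hex := hmemiff.mp hx
    simp only [hσ, dif_pos hex]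
    set k0 := hex.choose with hk0
    obtain ⟨hk, hfk, hpk⟩ := hex.choose_spec
    have hd := pick_dominates (f := roundRobin hn π) hpref hXX hk
    rw [hfk] at hd
    rw [← hpk]
    exact hd

end RR
section EF1
variable {n : ℕ} {pref : Fin n → Obj → Obj → Prop} {X : Finset Obj}
  (hn : 0 < n) (π : Equiv.Perm (Fin n)) (hpref : LinProfile pref)

lemma PD_refl {r : Obj → Obj → Prop} (hr : IsLinearOrder Obj r) (S : Finset Obj) :
    PD r S S :=
  ⟨id, Function.injective_id, fun x => refl_of r x.1⟩

include hpref

/-- key helper for EF1: map later picks of i to earlier picks of j -/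
lemma draftPi_EF1_helper {i j : Fin n} (T : Finset Obj)
    (g : ℕ → ℕ) (Q : ℕ → Prop)
    (hT : ∀ x ∈ T, ∃ k, k < X.card ∧ Q k ∧
      pick pref (roundRobin hn π) X k = x ∧ g k ≤ k ∧ roundRobin hn π (g k) = j)
    (hginj : ∀ k l, Q k → Q l → g k = g l → k = l) :
    PD (pref j) (draftPi hn pref π X j) T := by
  classical
  haveI := hpref j
  set σ : Obj → Obj := fun x =>
    if h : ∃ k, k < X.card ∧ Q k ∧
        pick pref (roundRobin hn π) X k = x ∧ g k ≤ k ∧ roundRobin hn π (g k) = j then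
      pick pref (roundRobin hn π) X (g h.choose) else 0 with hσ
  apply PD_of_inj_map _ σ
  · intro x hx
    have hex := hT x hx
    simp only [hσ, dif_pos hex]
    obtain ⟨hk, hQ, hpk, hgk, hgj⟩ := hex.choose_spec
    have hmm : pick pref (roundRobin hn π) X (g hex.choose)
        ∈ draft pref (roundRobin hn π) X (roundRobin hn π (g hex.choose)) :=
      pick_mem_draft (by omega)
    rw [hgj] at hmm
    exact hmm
  · intro x hx y hy hxy
    simp only [Finset.mem_coe] at hx hy
    have hex := hT x hx
    have hey := hT y hy
    simp only [hσ, dif_pos hex, dif_pos hey] at hxy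
    obtain ⟨hk1, hQ1, hp1, hg1, -⟩ := hex.choose_spec
    obtain ⟨hk2, hQ2, hp2, hg2, -⟩ := hey.choose_spec
    have heq := pick_injOn hpref (by omega) (by omega) hxy
    have := hginj _ _ hQ1 hQ2 heq
    rw [← hp1, ← hp2, this]
  · intro x hx
    have hex := hT x hx
    simp only [hσ, dif_pos hex]
    set k0 := hex.choose with hk0
    obtain ⟨hk, hQ, hpk, hgk, hgj⟩ := hex.choose_spec
    have hmem : pick pref (roundRobin hn π) X k0 ∈ remaining pref (roundRobin hn π) X (g k0) :=
      rem_mono hgk (pick_mem hpref hk)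
    have hd := pick_top hpref (lt_of_le_of_lt hgk hk) hmem
    rw [hgj] at hd
    rw [← hpk]
    exact hd

lemma draftPi_EF1 (i j : Fin n) :
    ∃ S ⊆ draftPi hn pref π X i, S.card ≤ 1 ∧
      PD (pref j) (draftPi hn pref π X j) (draftPi hn pref π X i \ S) := by
  classical
  rcases eq_or_ne i j with rfl | hij
  · exact ⟨∅, Finset.empty_subset _, by simp, by
      rw [Finset.sdiff_empty]; exact PD_refl (hpref i) _⟩
  have hijπ : π i ≠ π j := fun h => hij (π.injective h)
  have hane : (π i : ℕ) ≠ (π j : ℕ) := fun h => hijπ (Fin.ext h)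
  have hbn : (π j : ℕ) < n := (π j).is_lt
  have han : (π i : ℕ) < n := (π i).is_lt
  rcases Nat.lt_or_ge (π j : ℕ) (π i : ℕ) with hba | hab
  · -- j picks earlier: S = ∅, map k ↦ k - π i + π j
    refine ⟨∅, Finset.empty_subset _, by simp, ?_⟩
    rw [Finset.sdiff_empty]
    apply draftPi_EF1_helper (i := i) (j := j) hn π hpref _ (fun k => k - (π i : ℕ) + (π j : ℕ))
      (fun k => k % n = (π i : ℕ))
    · intro x hx
      obtain ⟨k, hk, hfk, hpk⟩ := draft_mem.mp hx
      have hmod : k % n = (π i : ℕ) := (roundRobin_eq hn π k i).mp hfk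
      have hdm := Nat.div_add_mod k n
      refine ⟨k, hk, hmod, hpk, by omega, ?_⟩
      rw [roundRobin_eq]
      rw [show k - (π i : ℕ) + (π j : ℕ) = n * (k / n) + (π j : ℕ) from by omega]
      rw [Nat.mul_add_mod, Nat.mod_eq_of_lt hbn]
    · intro k l hk hl hg
      have hk' : k % n = (π i : ℕ) := hk
      have hl' : l % n = (π i : ℕ) := hl
      have hg' : k - (π i : ℕ) + (π j : ℕ) = l - (π i : ℕ) + (π j : ℕ) := hg
      have hdk := Nat.div_add_mod k n
      have hdl := Nat.div_add_mod l n
      omega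
  · -- i picks earlier: S = {pick (π i)}, map k ↦ k - (n + π i) + π j
    have hab' : (π i : ℕ) < (π j : ℕ) := by omega
    set S := (draftPi hn pref π X i).filter
      (fun y => y = pick pref (roundRobin hn π) X (π i : ℕ)) with hS
    refine ⟨S, Finset.filter_subset _ _, ?_, ?_⟩
    · have hsub : S ⊆ {pick pref (roundRobin hn π) X (π i : ℕ)} := by
        intro y hy
        exact Finset.mem_singleton.mpr (Finset.mem_filter.mp hy).2
      have := Finset.card_le_card hsub
      simpa using this
    apply draftPi_EF1_helper (i := i) (j := j) hn π hpref _ (fun k => k - (n + (π i : ℕ)) + (π j : ℕ))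
      (fun k => k % n = (π i : ℕ) ∧ n + (π i : ℕ) ≤ k)
    · intro x hx
      obtain ⟨hxd, hxs⟩ := Finset.mem_sdiff.mp hx
      obtain ⟨k, hk, hfk, hpk⟩ := draft_mem.mp hxd
      have hmod : k % n = (π i : ℕ) := (roundRobin_eq hn π k i).mp hfk
      have hkne : k ≠ (π i : ℕ) := by
        intro h
        exact hxs (Finset.mem_filter.mpr ⟨hxd, by rw [← hpk, h]⟩)
      have hdm := Nat.div_add_mod k n
      have hq1 : 1 ≤ k / n := by
        by_contra h0
        push_neg at h0
        interval_cases h : k / n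
        · omega
      have hmul : n * (k / n - 1) + n = n * (k / n) := by
        rw [← Nat.mul_succ]
        congr 1
        omega
      have hka : n + (π i : ℕ) ≤ k := by omega
      refine ⟨k, hk, ⟨hmod, hka⟩, hpk, by omega, ?_⟩
      rw [roundRobin_eq]
      rw [show k - (n + (π i : ℕ)) + (π j : ℕ) = n * (k / n - 1) + (π j : ℕ) from by omega]
      rw [Nat.mul_add_mod, Nat.mod_eq_of_lt hbn]
    · intro k l hk hl hg
      obtain ⟨hk1, hk2⟩ := hk
      obtain ⟨hl1, hl2⟩ := hl
      have hg' : k - (n + (π i : ℕ)) + (π j : ℕ) = l - (n + (π i : ℕ)) + (π j : ℕ) := hg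
      omega

end EF1
section Forward
variable {n : ℕ} (hn : 0 < n) (π : Equiv.Perm (Fin n))
  (φ : (Fin n → Obj → Obj → Prop) → Finset Obj → Fin n → Finset Obj)

include hn

/-- cards of any rule satisfying the axioms -/
lemma phi_card
    (hvalid : ∀ pref, LinProfile pref → ∀ X : Finset Obj, X.Nonempty → IsAlloc (φ pref X) X)
    (hW : ∀ pref, LinProfile pref → ∀ X : Finset Obj, X.Nonempty →
      ∀ i j : Fin n, π i < π j → (φ pref X j).card ≤ (φ pref X i).card)
    (hE : ∀ pref, LinProfile pref → ∀ X : Finset Obj, X.Nonempty →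
      ∀ i j : Fin n, ∃ S ⊆ φ pref X i, S.card ≤ 1 ∧
        PD (pref j) (φ pref X j) (φ pref X i \ S))
    (hN : ∀ pref, LinProfile pref → ∀ X : Finset Obj, X.Nonempty →
      Finset.univ.biUnion (φ pref X) = X)
    {pref : Fin n → Obj → Obj → Prop} (hpref : LinProfile pref)
    {X : Finset Obj} (hX : X.Nonempty) (i : Fin n) :
    (φ pref X i).card = X.card / n + if (π i : ℕ) < X.card % n then 1 else 0 := by
  have hsum : ∑ j, (φ pref X j).card = X.card := by
    have h := Finset.card_biUnion (s := (Finset.univ : Finset (Fin n))) (t := φ pref X)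
      (fun a _ b _ hab => (hvalid pref hpref X hX).2 a b hab)
    rw [hN pref hpref X hX] at h
    exact h.symm
  have hmono : ∀ a b : Fin n, a ≤ b →
      (φ pref X (π.symm b)).card ≤ (φ pref X (π.symm a)).card := by
    intro a b hab
    rcases eq_or_lt_of_le hab with rfl | hlt
    · exact le_refl _
    · exact hW pref hpref X hX _ _ (by simpa using hlt)
  have hbal : ∀ a b : Fin n, (φ pref X (π.symm a)).card ≤ (φ pref X (π.symm b)).card + 1 := by
    intro a b
    obtain ⟨S, hSsub, hScard, hPD⟩ := hE pref hpref X hX (π.symm a) (π.symm b)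
    have h1 := PD_card hPD
    have h2 := Finset.card_sdiff_of_subset hSsub
    omega
  have hsum2 : ∑ a, (φ pref X (π.symm a)).card = X.card := by
    rw [← hsum]
    exact Equiv.sum_comp π.symm (fun j => (φ pref X j).card)
  have huniq := uniq_card_profile hn (fun a => (φ pref X (π.symm a)).card) X.card
    hmono hbal hsum2 (π i)
  simpa using huniq

theorem forward_draft
    (hvalid : ∀ pref, LinProfile pref → ∀ X : Finset Obj, X.Nonempty → IsAlloc (φ pref X) X)
    (hW : ∀ pref, LinProfile pref → ∀ X : Finset Obj, X.Nonempty →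
      ∀ i j : Fin n, π i < π j → (φ pref X j).card ≤ (φ pref X i).card)
    (hE : ∀ pref, LinProfile pref → ∀ X : Finset Obj, X.Nonempty →
      ∀ i j : Fin n, ∃ S ⊆ φ pref X i, S.card ≤ 1 ∧
        PD (pref j) (φ pref X j) (φ pref X i \ S))
    (hN : ∀ pref, LinProfile pref → ∀ X : Finset Obj, X.Nonempty →
      Finset.univ.biUnion (φ pref X) = X)
    (hR : ∀ pref, LinProfile pref → ∀ X X' : Finset Obj, X'.Nonempty → X' ⊆ X →
      ∀ i, PD (pref i) (φ pref X i) (φ pref X' i))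
    {pref : Fin n → Obj → Obj → Prop} (hpref : LinProfile pref) :
    ∀ X : Finset Obj, X.Nonempty → φ pref X = draftPi hn pref π X := by
  classical
  set f := roundRobin hn π with hf
  have hmain : ∀ m : ℕ, ∀ X : Finset Obj, X.card = m → X.Nonempty →
      φ pref X = draftPi hn pref π X := by
    intro m
    induction m using Nat.strong_induction_on with
    | _ m IH =>
    intro X hXcard hXne
    subst hXcard
    -- key claim
    have claim : ∀ k, k < X.card → pick pref f X k ∈ φ pref X (f k) := by
      intro k
      induction k using Nat.strong_induction_on with
      | _ k ih =>
      intro hk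
      rcases Nat.lt_or_ge (k+1) X.card with hklt | hkge
      · -- not the last step
        set y := pick pref f X (X.card - 1) with hy
        set X' := X.erase y with hX'
        have hX'card : X'.card = X.card - 1 := card_erase_last hpref (by omega)
        have hX'ne : X'.Nonempty := by
          rw [← Finset.card_pos, hX'card]; omega
        have hX'sub : X' ⊆ X := Finset.erase_subset _ _
        have hIH : φ pref X' = draftPi hn pref π X' :=
          IH (X.card - 1) (by omega) X' hX'card hX'ne
        set i := f k with hi
        have hdom := hR pref hpref X X' hX'ne hX'sub i
        rw [hIH] at hdom
        obtain ⟨μ, hμinj, hμdom⟩ := hdom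
        haveI := hpref i
        -- the sets A and B
        set A := (φ pref X i).filter (fun z => pref i z (pick pref f X k)) with hA
        set B := (φ pref X i).filter
          (fun z => pref i z (pick pref f X k) ∧ z ≠ pick pref f X k) with hB
        have hBA : B ⊆ A := by
          intro z hz
          rw [hB, Finset.mem_filter] at hz
          rw [hA, Finset.mem_filter]
          exact ⟨hz.1, hz.2.1⟩
        -- B = picks of i before step k
        have hBeq : B = ((Finset.range k).filter (fun l => f l = i)).image
            (pick pref f X) := by
          apply Finset.Subset.antisymm
          · intro z hz
            rw [hB, Finset.mem_filter] at hz
            obtain ⟨hzphi, hzpref, hzne⟩ := hz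
            have hzX : z ∈ X := (hvalid pref hpref X hXne).1 i hzphi
            have hznotrem : z ∉ remaining pref f X k := by
              intro hzrem
              exact hzne (antisymm hzpref (pick_top hpref hk hzrem))
            rcases cover (k := k) hzX with h | ⟨l, hl, hpl⟩
            · exact absurd h hznotrem
            · have hfl : f l = i := by
                by_contra hne
                have hplmem : pick pref f X l ∈ φ pref X (f l) := ih l hl (by omega)
                rw [hpl] at hplmem
                exact (Finset.disjoint_left.mp
                  ((hvalid pref hpref X hXne).2 (f l) i hne)) hplmem hzphi
              exact Finset.mem_image.mpr ⟨l, Finset.mem_filter.mpr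
                ⟨Finset.mem_range.mpr hl, hfl⟩, hpl⟩
          · intro z hz
            obtain ⟨l, hl, hpl⟩ := Finset.mem_image.mp hz
            obtain ⟨hlr, hfl⟩ := Finset.mem_filter.mp hl
            have hlk := Finset.mem_range.mp hlr
            rw [hB, Finset.mem_filter]
            refine ⟨?_, ?_, ?_⟩
            · rw [← hpl, ← hfl]; exact ih l hlk (by omega)
            · rw [← hpl, ← hfl]
              exact pick_top hpref (by omega) (rem_mono (le_of_lt hlk) (pick_mem hpref hk))
            · rw [← hpl]
              exact pick_ne hpref hlk hk
        have hBcard : B.card = ((Finset.range k).filter (fun l => f l = i)).card := by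
          rw [hBeq]
          apply Finset.card_image_of_injOn
          intro l1 h1 l2 h2 heq
          simp only [Finset.mem_coe, Finset.mem_filter, Finset.mem_range] at h1 h2
          exact pick_injOn hpref (by omega) (by omega) heq
        -- injection from steps ≤ k of agent i into A
        have hKA : (((Finset.range (k+1)).filter (fun l => f l = i))).card ≤ A.card := by
          set σ : ℕ → Obj := fun l =>
            if h : pick pref f X l ∈ draft pref f X' i then (μ ⟨pick pref f X l, h⟩).1
            else 0 with hσ
          apply Finset.card_le_card_of_injOn σ
          · intro l hl
            obtain ⟨hlr, hfl⟩ := Finset.mem_filter.mp hl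
            have hlk : l < k + 1 := Finset.mem_range.mp hlr
            have hpick_eq : pick pref f X' l = pick pref f X l :=
              pick_erase_last (f := f) hpref (by omega) (by omega)
            have hmem : pick pref f X l ∈ draft pref f X' i := by
              rw [← hpick_eq, ← hfl]
              apply pick_mem_draft
              omega
            simp only [hσ, dif_pos hmem]
            refine Finset.mem_coe.mpr (Finset.mem_filter.mpr ?_)
            constructor
            · exact (μ ⟨pick pref f X l, hmem⟩).2
            · have h1 := hμdom ⟨pick pref f X l, hmem⟩
              have h2 : pref i (pick pref f X l) (pick pref f X k) := by
                rw [← hfl]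
                exact pick_top hpref (by omega) (rem_mono (by omega) (pick_mem hpref hk))
              exact trans_of (pref i) h1 h2
          · intro l1 h1 l2 h2 heq
            simp only [Finset.mem_coe, Finset.mem_filter, Finset.mem_range] at h1 h2
            have hm1 : pick pref f X l1 ∈ draft pref f X' i := by
              rw [← pick_erase_last (f := f) hpref (by omega) (by omega), ← h1.2]
              apply pick_mem_draft
              omega
            have hm2 : pick pref f X l2 ∈ draft pref f X' i := by
              rw [← pick_erase_last (f := f) hpref (by omega) (by omega), ← h2.2]
              apply pick_mem_draft
              omega
            simp only [hσ, dif_pos hm1, dif_pos hm2] at heq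
            have := hμinj (Subtype.ext heq)
            have hpe : pick pref f X l1 = pick pref f X l2 := congrArg Subtype.val this
            exact pick_injOn hpref (by omega) (by omega) hpe
        -- card counting
        have hKcard : ((Finset.range (k+1)).filter (fun l => f l = i)).card
            = ((Finset.range k).filter (fun l => f l = i)).card + 1 := by
          rw [Finset.range_add_one, Finset.filter_insert, if_pos rfl,
            Finset.card_insert_of_notMem (by simp)]
        have hAB : ¬ A ⊆ B := by
          intro hsub
          have := Finset.card_le_card hsub
          omega
        obtain ⟨z, hzA, hzB⟩ := Finset.not_subset.mp hAB
        rw [hA, Finset.mem_filter] at hzA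
        have : z = pick pref f X k := by
          by_contra hne
          exact hzB (by rw [hB, Finset.mem_filter]; exact ⟨hzA.1, hzA.2, hne⟩)
        rw [← this]
        exact hzA.1
      · -- last step: k + 1 = X.card
        have hklast : k + 1 = X.card := by omega
        set i := f k with hi
        have hmem : pick pref f X k ∈ Finset.univ.biUnion (φ pref X) := by
          rw [hN pref hpref X hXne]
          exact pick_mem_X hpref hk
        obtain ⟨j, -, hj⟩ := Finset.mem_biUnion.mp hmem
        rcases eq_or_ne j i with rfl | hne
        · exact hj
        exfalso
        -- φ j contains all of j's picks plus pick k: too many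
        set W := insert (pick pref f X k)
          (((Finset.range k).filter (fun l => f l = j)).image (pick pref f X)) with hW2
        have hWsub : W ⊆ φ pref X j := by
          intro z hz
          rcases Finset.mem_insert.mp hz with rfl | hz
          · exact hj
          · obtain ⟨l, hl, hpl⟩ := Finset.mem_image.mp hz
            obtain ⟨hlr, hfl⟩ := Finset.mem_filter.mp hl
            have hlk := Finset.mem_range.mp hlr
            rw [← hpl, ← hfl]
            exact ih l hlk (by omega)
        have hWcard : W.card = ((Finset.range k).filter (fun l => f l = j)).card + 1 := by
          rw [hW2, Finset.card_insert_of_notMem, Finset.card_image_of_injOn]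
          · intro l1 h1 l2 h2 heq
            simp only [Finset.mem_coe, Finset.mem_filter, Finset.mem_range] at h1 h2
            exact pick_injOn hpref (by omega) (by omega) heq
          · intro hcon
            obtain ⟨l, hl, hpl⟩ := Finset.mem_image.mp hcon
            obtain ⟨hlr, -⟩ := Finset.mem_filter.mp hl
            have hlk := Finset.mem_range.mp hlr
            exact pick_ne hpref hlk hk hpl
        have hrange : (Finset.range k).filter (fun l => f l = j)
            = (Finset.range X.card).filter (fun l => f l = j) := by
          rw [← hklast, Finset.range_add_one, Finset.filter_insert, if_neg]
          exact fun h => hne (h ▸ rfl)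
        have hcount : ((Finset.range X.card).filter (fun l => f l = j)).card
            = X.card / n + if (π j : ℕ) < X.card % n then 1 else 0 := by
          rw [Finset.filter_congr (fun l _ => by rw [hf, roundRobin_eq hn π l j])]
          exact count_mod_card hn (π j) (π j).is_lt X.card
        have hφj := phi_card hn π φ hvalid hW hE hN hpref hXne j
        have hWle := Finset.card_le_card hWsub
        rw [hWcard, hrange, hcount] at hWle
        omega
    -- conclude: draft ⊆ φ and equal cards
    funext i
    have hsub : draftPi hn pref π X i ⊆ φ pref X i := by
      intro x hx
      obtain ⟨k, hk, hfk, hpk⟩ := draft_mem.mp hx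
      rw [← hpk, ← hfk]
      exact claim k hk
    have hcards : (φ pref X i).card ≤ (draftPi hn pref π X i).card := by
      have h1 := phi_card hn π φ hvalid hW hE hN hpref hXne i
      have h2 := draftPi_card (X := X) hn π hpref i
      omega
    exact (Finset.eq_of_subset_of_card_le hsub hcards).symm
  intro X hXne
  exact hmain X.card X rfl hXne

end Forward

theorem draft_characterization {n : ℕ} (hn : 2 ≤ n) (π : Equiv.Perm (Fin n))
    (φ : (Fin n → Obj → Obj → Prop) → Finset Obj → Fin n → Finset Obj)
    (hvalid : ∀ pref, LinProfile pref → ∀ X : Finset Obj, X.Nonempty →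
      IsAlloc (φ pref X) X) :
    ((∀ pref, LinProfile pref → ∀ X : Finset Obj, X.Nonempty →
        ∀ i j : Fin n, π i < π j → (φ pref X j).card ≤ (φ pref X i).card) ∧
      (∀ pref, LinProfile pref → ∀ X : Finset Obj, X.Nonempty →
        ∀ i j : Fin n, ∃ S ⊆ φ pref X i, S.card ≤ 1 ∧
          PD (pref j) (φ pref X j) (φ pref X i \ S)) ∧
      (∀ pref, LinProfile pref → ∀ X : Finset Obj, X.Nonempty →
        Finset.univ.biUnion (φ pref X) = X) ∧
      (∀ pref, LinProfile pref → ∀ X X' : Finset Obj, X'.Nonempty → X' ⊆ X →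
        ∀ i, PD (pref i) (φ pref X i) (φ pref X' i))) ↔
      (∀ pref, LinProfile pref → ∀ X : Finset Obj, X.Nonempty →
        φ pref X = draftPi (lt_of_lt_of_le Nat.zero_lt_two hn) pref π X) := by
  set hn0 : 0 < n := lt_of_lt_of_le Nat.zero_lt_two hn with hhn0
  constructor
  · rintro ⟨hW, hE, hN, hR⟩ pref hpref X hX
    exact forward_draft hn0 π φ hvalid hW hE hN hR hpref X hX
  · intro heq
    refine ⟨?_, ?_, ?_, ?_⟩
    · intro pref hpref X hX i j hij
      rw [heq pref hpref X hX]
      exact draftPi_WRP hn0 π hpref hij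
    · intro pref hpref X hX i j
      rw [heq pref hpref X hX]
      exact draftPi_EF1 hn0 π hpref i j
    · intro pref hpref X hX
      rw [heq pref hpref X hX]
      exact draftPi_NW hn0 π hpref
    · intro pref hpref X X' hX' hsub i
      have hXne : X.Nonempty := by
        obtain ⟨x, hx⟩ := hX'
        exact ⟨x, hsub hx⟩
      rw [heq pref hpref X hXne, heq pref hpref X' hX']
      exact draftPi_RM hn0 π hpref hsub i
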